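/- arXiv:math/0605723 — 3 statements merged into one kernel-verified Lean document; each statement's English description precedes it below -/
import Mathlib

section
/- Let Γ be a countable discrete group and f ∈ ℤΓ such that the action α_f on X_f is expansive. Then for every L > 0 and ε > 0 there exists a finite subset F(L,ε) ⊆ Γ with the following property: if w ∈ ℓ∞(Γ) satisfies ρ_f w ∈ ℓ∞(Γ,ℤ), ‖w‖_∞ ≤ L, and (ρ_f w)_γ = 0 for every γ ∈ F(L,ε), then |w_1| < ε (where w_1 is the value of w at the identity of Γ). -/
open scoped BigOperators symmDiff Pointwise

noncomputable section

/-- The additive circle `𝕋 = ℝ/ℤ`. -/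
abbrev Torus : Type := AddCircle (1 : ℝ)

section GroupDefs

variable {Γ : Type*} [Group Γ]

/-- For `f ∈ ℤΓ`, the map `ρ_f : 𝕋^Γ → 𝕋^Γ`, `(ρ_f x)_{γ'} = Σ_γ f_γ • x_{γ'γ}`. -/
def rhoT (f : Γ →₀ ℤ) (x : Γ → Torus) : Γ → Torus :=
  fun γ' => f.sum fun γ c => c • x (γ' * γ)

/-- The compact abelian group `X_f = ker ρ_f ⊆ 𝕋^Γ` (as a subset). -/
def XSet (f : Γ →₀ ℤ) : Set (Γ → Torus) := {x | rhoT f x = 0}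

/-- The left shift `(λ^γ x)_{γ'} = x_{γ⁻¹ γ'}` on `𝕋^Γ`; restricted to `X_f` this is `α_f^γ`. -/
def lsh (γ : Γ) (x : Γ → Torus) : Γ → Torus := fun γ' => x (γ⁻¹ * γ')

/-- The left shift `(λ^γ w)_{γ'} = w_{γ⁻¹ γ'}` on real-valued functions. -/
def lshR (γ : Γ) (w : Γ → ℝ) : Γ → ℝ := fun γ' => w (γ⁻¹ * γ')

/-- Expansiveness of the `Γ`-action `α_f` on `X_f`: there is an open neighbourhood `U`
of `0` such that the only point of `X_f` all of whose translates stay in `U` is `0`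
(equivalently, `⋂_γ α_f^γ (U ∩ X_f) = {0}`). -/
def ExpansiveAction (f : Γ →₀ ℤ) : Prop :=
  ∃ U : Set (Γ → Torus), IsOpen U ∧ {x | x ∈ XSet f ∧ ∀ γ : Γ, lsh γ x ∈ U} = {0}

/-- `w ∈ ℓ∞(Γ)`: boundedness of a real-valued function. -/
def Bdd (w : Γ → ℝ) : Prop := ∃ C : ℝ, ∀ γ : Γ, |w γ| ≤ C

/-- `w ∈ ℓ∞(Γ,ℤ)`: all values are integers. -/
def IntValued (w : Γ → ℝ) : Prop := ∀ γ : Γ, ∃ k : ℤ, w γ = (k : ℝ)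

/-- For `f ∈ ℤΓ`, the operator `ρ_f` on `ℓ∞(Γ)`: `(ρ_f w)_γ = Σ_{γ'} w_{γγ'} f_{γ'}`. -/
def rhoInf (f : Γ →₀ ℤ) (w : Γ → ℝ) : Γ → ℝ :=
  fun γ => f.sum fun γ' c => (c : ℝ) * w (γ * γ')

/-- For `h ∈ ℓ¹(Γ)`, the operator `ρ_h` on `ℓ∞(Γ)`: `(ρ_h w)_γ = Σ_{γ'} w_{γγ'} h_{γ'}`. -/
def rhoL1 (h : Γ → ℝ) (w : Γ → ℝ) : Γ → ℝ :=
  fun γ => ∑' γ' : Γ, w (γ * γ') * h γ'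

/-- Convolution on `ℓ¹(Γ)`: `(g·h)_γ = Σ_{γ'} g_{γ'} h_{γ'⁻¹γ}`. -/
def conv (g h : Γ → ℝ) : Γ → ℝ := fun γ => ∑' γ' : Γ, g γ' * h (γ'⁻¹ * γ)

/-- Convolution on `ℓ¹(Γ,ℂ)`. -/
def convC (g h : Γ → ℂ) : Γ → ℂ := fun γ => ∑' γ' : Γ, g γ' * h (γ'⁻¹ * γ)

open Classical in
/-- The unit `δ₁` of the convolution algebra `ℓ¹(Γ)`. -/
def deltaOne : Γ → ℝ := fun γ => if γ = 1 then 1 else 0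

open Classical in
/-- The unit `δ₁` of `ℓ¹(Γ,ℂ)`. -/
def deltaOneC : Γ → ℂ := fun γ => if γ = 1 then 1 else 0

/-- `g` is a two-sided convolution inverse of `f` in `ℓ¹(Γ)`. -/
def IsL1Inverse (f g : Γ → ℝ) : Prop :=
  Summable g ∧ conv f g = deltaOne ∧ conv g f = deltaOne

/-- View `f ∈ ℤΓ` as an element of `ℓ¹(Γ)`. -/
def fR (f : Γ →₀ ℤ) : Γ → ℝ := fun γ => (f γ : ℝ)

/-- View `f ∈ ℤΓ` as an element of `ℓ¹(Γ,ℂ)`. -/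
def fCC (f : Γ →₀ ℤ) : Γ → ℂ := fun γ => (f γ : ℂ)

/-- The `ℓ¹`-norm `‖f‖₁` of `f ∈ ℤΓ`. -/
def finsuppL1 (f : Γ →₀ ℤ) : ℝ := f.sum fun _ c => |(c : ℝ)|

/-- The `ℓ¹`-norm of `h ∈ ℓ¹(Γ,ℂ)`. -/
def l1normC (h : Γ → ℂ) : ℝ := ∑' γ : Γ, ‖h γ‖

/-- Coordinatewise reduction mod 1, `η : ℓ∞(Γ) → 𝕋^Γ`. -/
def etaT (w : Γ → ℝ) : Γ → Torus := fun γ => ((w γ : ℝ) : Torus)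

/-- The map `ξ = η ∘ ρ_{w}` for `w ∈ ℓ¹(Γ)`. -/
def xiMap (w : Γ → ℝ) (v : Γ → ℝ) : Γ → Torus := etaT (rhoL1 w v)

/-- A point `x ∈ 𝕋^Γ` is homoclinic if `λ^γ x → 0` along the cofinite filter on `Γ`. -/
def IsHomoclinic (x : Γ → Torus) : Prop :=
  Filter.Tendsto (fun γ : Γ => lsh γ x) Filter.cofinite (nhds 0)

/-- The set of `Γ'`-fixed points of `α_f` in `X_f`. -/
def FixSet (f : Γ →₀ ℤ) (Γ' : Subgroup Γ) : Set (Γ → Torus) :=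
  {x | x ∈ XSet f ∧ ∀ γ ∈ Γ', lsh γ x = x}

/-- Left `(K,ε)`-invariance of a finite set `Q ⊆ Γ`. -/
def LeftInv [DecidableEq Γ] (K : Finset Γ) (ε : ℝ) (Q : Finset Γ) : Prop :=
  ∑ γ ∈ K, (((Q.image fun q => γ * q) ∆ Q).card : ℝ) / (Q.card : ℝ) < ε

/-- Right `(K,ε)`-invariance of a finite set `Q ⊆ Γ`. -/
def RightInv [DecidableEq Γ] (K : Finset Γ) (ε : ℝ) (Q : Finset Γ) : Prop :=
  ∑ γ ∈ K, (((Q.image fun q => q * γ) ∆ Q).card : ℝ) / (Q.card : ℝ) < ε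

/-- Amenability: existence of a left Følner sequence. -/
def Amenable (Γ : Type*) [Group Γ] [DecidableEq Γ] : Prop :=
  ∃ Q : ℕ → Finset Γ, (∀ n, (Q n).Nonempty) ∧
    ∀ (K : Finset Γ) (ε : ℝ), 0 < ε → ∃ N : ℕ, ∀ n ≥ N, LeftInv K ε (Q n)

/-- Residual finiteness: there is a sequence of finite-index normal subgroups with
trivial intersection. -/
def ResFinite (Γ : Type*) [Group Γ] : Prop :=
  ∃ N : ℕ → Subgroup Γ, (∀ n, (N n).Normal ∧ (N n).FiniteIndex) ∧
    ∀ γ : Γ, (∀ n, γ ∈ N n) → γ = 1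

/-- `Q` is a fundamental domain for the coset space `Γ/Γ'`:
`{γQ : γ ∈ Γ'}` is a partition of `Γ`. -/
def IsFundDomain (Γ' : Subgroup Γ) (Q : Finset Γ) : Prop :=
  ∀ x : Γ, ∃! p : Γ × Γ, p.1 ∈ Γ' ∧ p.2 ∈ Q ∧ p.1 * p.2 = x

/-- `lim_n Γ_n = {1}`: for every finite `K ⊆ Γ` eventually `Γ_n ∩ K⁻¹K = {1}`. -/
def LimTriv (N : ℕ → Subgroup Γ) : Prop :=
  ∀ K : Finset Γ, ∃ M : ℕ, ∀ n ≥ M, ∀ γ ∈ N n, (∃ a ∈ K, ∃ b ∈ K, γ = a⁻¹ * b) → γ = 1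

/-- The word ball `B_F(n)` of radius `n` with respect to a generating set `F`. -/
def BallF (F : Finset Γ) (n : ℕ) : Set Γ :=
  {γ | ∃ l : List Γ, l.length ≤ n ∧ (∀ a ∈ l, a ∈ F) ∧ l.prod = γ}

end GroupDefs

/-- The Hilbert space `ℓ²(Γ,ℂ)`. -/
abbrev H2 (Γ : Type*) : Type _ := lp (fun _ : Γ => ℂ) 2

section Hilbert

variable {Γ : Type*} [Group Γ]

open Classical in
/-- The standard basis vector `δ₁ ∈ ℓ²(Γ,ℂ)`. -/
def deltaL2 : H2 Γ := lp.single 2 (1 : Γ) (1 : ℂ)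

/-- `A` is the right-convolution operator `ρ_f` on `ℓ²(Γ,ℂ)`,
`(ρ_f w)_γ = Σ_{γ'} w_{γγ'} f_{γ'}`. -/
def IsRho (f : Γ → ℂ) (A : H2 Γ →L[ℂ] H2 Γ) : Prop :=
  ∀ (w : H2 Γ) (γ : Γ), (A w : Γ → ℂ) γ = ∑' γ' : Γ, (w : Γ → ℂ) (γ * γ') * f γ'

instance instCFCH2 : ContinuousFunctionalCalculus ℝ (H2 Γ →L[ℂ] H2 Γ) IsSelfAdjoint :=
  IsSelfAdjoint.instContinuousFunctionalCalculus

/-- The von Neumann trace of `log (A A*)`, i.e. `tr_{NΓ}(log (A A*)) = (log(AA*) δ₁)(1)`,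
where `log` is given by the continuous functional calculus. -/
def trLogAAstar (A : H2 Γ →L[ℂ] H2 Γ) : ℝ :=
  (((cfc Real.log (A * star A)) deltaL2 : Γ → ℂ) (1 : Γ)).re

/-- The Fuglede–Kadison determinant `det_{NΓ} A = exp(½ tr(log (A A*)))`. -/
def detFK (A : H2 Γ →L[ℂ] H2 Γ) : ℝ := Real.exp (2⁻¹ * trLogAAstar A)

open Classical in
/-- `f^{(n)} : Γ/Γ_n → ℂ`, integration along the fibres: `f^{(n)}(δ) = Σ_{γ ∈ δ} f_γ`. -/
def fQuot (f : Γ → ℂ) (H : Subgroup Γ) : (Γ ⧸ H) → ℂ :=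
  fun δ => ∑' γ : Γ, if (QuotientGroup.mk γ : Γ ⧸ H) = δ then f γ else 0

open Classical in
/-- The indicator of the identity coset in `ℓ²(Γ/Γ_n, ℂ)`. -/
def deltaQuot (H : Subgroup Γ) : (Γ ⧸ H) → ℂ :=
  fun δ => if δ = (QuotientGroup.mk (1 : Γ) : Γ ⧸ H) then 1 else 0

end Hilbert


section AuxS7

variable {Γ : Type*} [Group Γ]

private lemma aux_norm_coe_le (r : ℝ) : ‖((r : ℝ) : Torus)‖ ≤ |r| := by
  rw [AddCircle.norm_eq]
  simpa using round_le r 0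

private lemma aux_coe_zero (r : ℝ) (h : ((r : ℝ) : Torus) = 0) (h2 : |r| < 1) : r = 0 := by
  rw [AddCircle.coe_eq_zero_iff] at h
  obtain ⟨n, hn⟩ := h
  have hnr : (n : ℝ) = r := by simpa using hn
  subst hnr
  have : |(n : ℤ)| < 1 := by exact_mod_cast (by simpa using h2 : |(n : ℝ)| < 1)
  rw [abs_lt] at this
  have : n = 0 := by omega
  simp [this]

private lemma aux_cube_subset (U : Set (Γ → Torus)) (hU : IsOpen U)
    (h0 : (0 : Γ → Torus) ∈ U) :
    ∃ δ : ℝ, 0 < δ ∧ ∀ x : Γ → Torus, (∀ γ, ‖x γ‖ ≤ δ) → x ∈ U := by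
  haveI : Fact ((0:ℝ) < 1) := ⟨one_pos⟩
  set V : ℕ → Set (Γ → Torus) := fun n => Set.univ.pi fun _ => Metric.closedBall 0 (1/(n+1))
    with hV
  have hVc : ∀ n, IsClosed (V n) := fun n =>
    isClosed_set_pi fun _ _ => Metric.isClosed_closedBall
  have hanti : Antitone V := by
    intro m n hmn
    apply Set.pi_mono
    intro γ _
    apply Metric.closedBall_subset_closedBall
    apply one_div_le_one_div_of_le (by positivity)
    have : (m : ℝ) ≤ n := by exact_mod_cast hmn
    linarith
  have hd : Directed (· ⊇ ·) V := hanti.directed_ge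
  have hU' : ∀ x ∈ ⋂ n, V n, U ∈ nhds x := by
    intro x hx
    have hx0 : x = 0 := by
      funext γ
      rw [Pi.zero_apply, ← norm_eq_zero]
      by_contra hne
      have hpos : 0 < ‖x γ‖ := lt_of_le_of_ne (norm_nonneg _) (Ne.symm hne)
      obtain ⟨n, hn⟩ := exists_nat_one_div_lt hpos
      have := Set.mem_iInter.mp hx n
      have := Set.mem_univ_pi.mp this γ
      rw [Metric.mem_closedBall, dist_zero_right] at this
      push_cast at hn
      linarith
    rw [hx0]
    exact hU.mem_nhds h0
  obtain ⟨n, hn⟩ := exists_subset_nhds_of_compactSpace hd hVc hU'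
  refine ⟨1/(n+1), by positivity, fun x hx => hn ?_⟩
  refine Set.mem_univ_pi.mpr fun γ => ?_
  rw [Metric.mem_closedBall, dist_zero_right]
  exact hx γ

private lemma aux_rhoT_scaled (f : Γ →₀ ℤ) (w : Γ → ℝ) (t : ℝ)
    (hrho : ∀ γ, rhoInf f w γ = 0) :
    rhoT f (fun γ => ((t * w γ : ℝ) : Torus)) = 0 := by
  funext γ'
  have hom : ∀ r : ℝ, ((r : Torus)) = (QuotientAddGroup.mk' (AddSubgroup.zmultiples (1:ℝ))) r :=
    fun r => rfl
  have key : rhoT f (fun γ => ((t * w γ : ℝ) : Torus)) γ'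
      = ((f.sum fun γ c => c • (t * w (γ' * γ)) : ℝ) : Torus) := by
    simp only [rhoT, hom, ← map_zsmul, ← map_finsuppSum]
  rw [key]
  have h2 : (f.sum fun γ c => c • (t * w (γ' * γ))) = t * rhoInf f w γ' := by
    rw [rhoInf, Finsupp.mul_sum]
    apply Finsupp.sum_congr
    intro γ _
    simp only [zsmul_eq_mul]
    ring
  rw [h2, hrho, mul_zero]
  simp

private lemma aux_continuous_rhoInf (f : Γ →₀ ℤ) (γ : Γ) :
    Continuous fun w : Γ → ℝ => rhoInf f w γ := by
  simp only [rhoInf, Finsupp.sum]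
  exact continuous_finset_sum _ fun γ' _ =>
    continuous_const.mul (continuous_apply (γ * γ'))

end AuxS7


/-- Let `Γ` be a countable discrete group and `f ∈ ℤΓ` such that `α_f`
is expansive. Then for all `L > 0`, `ε > 0` there is a finite `F(L,ε) ⊆ Γ` such that any
`w ∈ ℓ∞(Γ)` with `ρ_f w ∈ ℓ∞(Γ,ℤ)`, `‖w‖_∞ ≤ L` and `(ρ_f w)_γ = 0` for all
`γ ∈ F(L,ε)` satisfies `|w_1| < ε`. -/

theorem statement7 {Γ : Type*} [Group Γ] [Countable Γ]
    (f : Γ →₀ ℤ) (hexp : ExpansiveAction f) :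
    ∀ L : ℝ, 0 < L → ∀ ε : ℝ, 0 < ε → ∃ F : Finset Γ, ∀ w : Γ → ℝ,
      IntValued (rhoInf f w) → (∀ γ : Γ, |w γ| ≤ L) →
      (∀ γ ∈ F, rhoInf f w γ = 0) → |w 1| < ε := by
  classical
  intro L hL ε hε
  by_contra hcon
  push_neg at hcon
  -- The closed constraint sets
  set B : Finset Γ → Set (Γ → ℝ) := fun F =>
    {w | (∀ γ, |w γ| ≤ L) ∧ (∀ γ ∈ F, rhoInf f w γ = 0) ∧ ε ≤ |w 1|} with hB
  have hBne : ∀ F, (B F).Nonempty := by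
    intro F
    obtain ⟨w, _, h2, h3, h4⟩ := hcon F
    exact ⟨w, h2, h3, h4⟩
  have hBcl : ∀ F, IsClosed (B F) := by
    intro F
    have : B F = (⋂ γ, {w : Γ → ℝ | |w γ| ≤ L}) ∩
        ((⋂ γ ∈ F, {w : Γ → ℝ | rhoInf f w γ = 0}) ∩ {w : Γ → ℝ | ε ≤ |w 1|}) := by
      ext w
      simp [hB]
    rw [this]
    refine IsClosed.inter (isClosed_iInter fun γ => ?_)
      (IsClosed.inter (isClosed_iInter fun γ => isClosed_iInter fun _ => ?_) ?_)
    · exact isClosed_le ((continuous_apply γ).abs) continuous_const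
    · exact isClosed_eq (aux_continuous_rhoInf f γ) continuous_const
    · exact isClosed_le continuous_const ((continuous_apply 1).abs)
  have hK : IsCompact (Set.univ.pi fun _ : Γ => Set.Icc (-L) L) :=
    isCompact_univ_pi fun _ => isCompact_Icc
  have hBcpt : ∀ F, IsCompact (B F) := by
    intro F
    refine IsCompact.of_isClosed_subset hK (hBcl F) ?_
    intro w hw
    exact Set.mem_univ_pi.mpr fun γ => abs_le.mp (hw.1 γ)
  have hdir : Directed (· ⊇ ·) B := by
    intro F F'
    refine ⟨F ∪ F', fun w hw => ⟨hw.1, fun γ hγ => hw.2.1 γ (Finset.mem_union_left _ hγ),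
      hw.2.2⟩, fun w hw => ⟨hw.1, fun γ hγ => hw.2.1 γ (Finset.mem_union_right _ hγ), hw.2.2⟩⟩
  obtain ⟨w, hw⟩ :=
    IsCompact.nonempty_iInter_of_directed_nonempty_isCompact_isClosed B hdir hBne hBcpt hBcl
  rw [Set.mem_iInter] at hw
  have hbd : ∀ γ, |w γ| ≤ L := (hw ∅).1
  have hrho : ∀ γ, rhoInf f w γ = 0 := fun γ => (hw {γ}).2.1 γ (Finset.mem_singleton_self γ)
  have hε1 : ε ≤ |w 1| := (hw ∅).2.2
  -- Use expansiveness
  obtain ⟨U, hUo, hUs⟩ := hexp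
  have h0mem : (0 : Γ → Torus) ∈ {x | x ∈ XSet f ∧ ∀ γ : Γ, lsh γ x ∈ U} := by
    rw [hUs]; rfl
  have h0U : (0 : Γ → Torus) ∈ U := by
    have := h0mem.2 1
    exact this
  obtain ⟨δ, hδ, hcube⟩ := aux_cube_subset U hUo h0U
  set t : ℝ := min δ 1 / (L + 1) with ht
  have htpos : 0 < t := div_pos (lt_min hδ one_pos) (by linarith)
  have htw : ∀ γ, |t * w γ| < min δ 1 := by
    intro γ
    have h1 : |t * w γ| = t * |w γ| := by
      rw [abs_mul, abs_of_pos htpos]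
    have h2 : t * |w γ| ≤ t * L := by
      apply mul_le_mul_of_nonneg_left (hbd γ) htpos.le
    have h3 : t * L < t * (L + 1) := by nlinarith
    have h4 : t * (L + 1) = min δ 1 := by
      rw [ht, div_mul_cancel₀]
      linarith
    linarith
  set x : Γ → Torus := fun γ => ((t * w γ : ℝ) : Torus) with hx
  have hxX : x ∈ XSet f := aux_rhoT_scaled f w t hrho
  have hxU : ∀ γ : Γ, lsh γ x ∈ U := by
    intro γ
    apply hcube
    intro γ'
    calc ‖lsh γ x γ'‖ = ‖((t * w (γ⁻¹ * γ') : ℝ) : Torus)‖ := rfl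
      _ ≤ |t * w (γ⁻¹ * γ')| := aux_norm_coe_le _
      _ ≤ δ := le_of_lt (lt_of_lt_of_le (htw _) (min_le_left _ _))
  have hx0 : x = 0 := by
    have : x ∈ ({0} : Set (Γ → Torus)) := by
      rw [← hUs]; exact ⟨hxX, hxU⟩
    simpa using this
  have hw1 : w 1 = 0 := by
    have hc : ((t * w 1 : ℝ) : Torus) = 0 := by
      have := congrFun hx0 1
      simpa [hx] using this
    have := aux_coe_zero (t * w 1) hc (lt_of_lt_of_le (htw 1) (min_le_right _ _))
    rcases mul_eq_zero.mp this with h | h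
    · exact absurd h htpos.ne'
    · exact h
  rw [hw1] at hε1
  simp at hε1
  linarith


end
end

section
/- Let Γ be a countable residually finite, finitely generated group of polynomial growth, with a finite symmetric generating set F containing the identity, and let B_F(n) = {γ₁⋯γ_k : k ≤ n, γ_i ∈ F} (with B_F(0) = {1}). Let f ∈ ℤΓ be such that α_f is expansive, i.e. f is invertible in ℓ¹(Γ) with inverse w_f^Δ = f⁻¹. Then w_f^Δ has exponential decay in the word metric: there exist constants C > 0 and θ ∈ (0,1) such that for every n ≥ 0 and every γ ∈ Γ with γ ∉ B_F(n), |(w_f^Δ)_γ| ≤ C·θⁿ. -/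
open scoped BigOperators symmDiff Pointwise

noncomputable section

section Hilbert

variable {Γ : Type*} [Group Γ]

/-- The von Neumann trace of `log (A A*)`, i.e. `tr_{NΓ}(log (A A*)) = (log(AA*) δ₁)(1)`,
where `log` is given by the continuous functional calculus. -/
instance H2.instCFCReal : ContinuousFunctionalCalculus ℝ (H2 Γ →L[ℂ] H2 Γ) IsSelfAdjoint :=
  IsSelfAdjoint.instContinuousFunctionalCalculus

end Hilbert



section DecayAux

variable {Γ : Type*} [Group Γ]

private lemma ballF_mono' (F : Finset Γ) {m n : ℕ} (h : m ≤ n) :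
    BallF F m ⊆ BallF F n := by
  rintro γ ⟨l, hl, hm, hp⟩
  exact ⟨l, hl.trans h, hm, hp⟩

private lemma ballF_mul' (F : Finset Γ) {m n : ℕ} {x y : Γ} (hx : x ∈ BallF F m)
    (hy : y ∈ BallF F n) : x * y ∈ BallF F (m + n) := by
  obtain ⟨l₁, h₁, m₁, p₁⟩ := hx
  obtain ⟨l₂, h₂, m₂, p₂⟩ := hy
  refine ⟨l₁ ++ l₂, by simpa using Nat.add_le_add h₁ h₂, ?_, by simp [p₁, p₂]⟩
  intro a ha
  rcases List.mem_append.1 ha with h | h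
  exacts [m₁ a h, m₂ a h]

private lemma sum_abs_fR_le (f : Γ →₀ ℤ) (B : Finset Γ) :
    ∑ x ∈ B, |fR f x| ≤ finsuppL1 f := by
  classical
  have h1 : ∑ x ∈ B, |fR f x| ≤ ∑ x ∈ B ∪ f.support, |fR f x| :=
    Finset.sum_le_sum_of_subset_of_nonneg Finset.subset_union_left
      (fun _ _ _ => abs_nonneg _)
  have h2 : ∑ x ∈ B ∪ f.support, |fR f x| = ∑ x ∈ f.support, |fR f x| := by
    refine (Finset.sum_subset Finset.subset_union_right ?_).symm
    intro x _ hx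
    have hx0 : f x = 0 := Finsupp.notMem_support_iff.1 hx
    simp [fR, hx0]
  rw [h2] at h1
  simpa [finsuppL1, Finsupp.sum, fR] using h1

private lemma abs_fR_le (f : Γ →₀ ℤ) (x : Γ) : |fR f x| ≤ finsuppL1 f := by
  classical
  simpa using sum_abs_fR_le f {x}

private lemma finsuppL1_nonneg (f : Γ →₀ ℤ) : 0 ≤ finsuppL1 f :=
  Finset.sum_nonneg fun _ _ => abs_nonneg _

end DecayAux

/-- Let `Γ` be a countable residually finite, finitely generated group
of polynomial growth with respect to a finite symmetric generating set `F ∋ 1`, and let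
`f ∈ ℤΓ` be such that `α_f` is expansive, i.e. `f` is invertible in `ℓ¹(Γ)` with inverse
`w = w_f^Δ`. Then `w` decays exponentially in the word metric: there are `C > 0` and
`θ ∈ (0,1)` with `|w_γ| ≤ C θⁿ` whenever `γ ∉ B_F(n)`. -/
theorem statement8 {Γ : Type*} [Group Γ] [Countable Γ] (hRF : ResFinite Γ)
    (F : Finset Γ) (hF1 : (1 : Γ) ∈ F) (hFsymm : ∀ γ ∈ F, γ⁻¹ ∈ F)
    (hgen : ∀ γ : Γ, ∃ n : ℕ, γ ∈ BallF F n)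
    (hgrowth : ∃ c d : ℝ, 1 ≤ c ∧ 1 ≤ d ∧ ∀ n : ℕ, 1 ≤ n →
      (BallF F n).Finite ∧ (Nat.card (BallF F n) : ℝ) ≤ c * (n : ℝ) ^ d)
    (f : Γ →₀ ℤ) (w : Γ → ℝ) (hw : IsL1Inverse (fR f) w) :
    ∃ C : ℝ, 0 < C ∧ ∃ θ : ℝ, θ ∈ Set.Ioo (0 : ℝ) 1 ∧
      ∀ n : ℕ, ∀ γ : Γ, γ ∉ BallF F n → |w γ| ≤ C * θ ^ n := by
  classical
  obtain ⟨hwsum, hfw, hwf⟩ := hw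
  have hwa : Summable fun x : Γ => |w x| := hwsum.abs
  set L : ℝ := finsuppL1 f with hLdef
  have hL0 : 0 ≤ L := finsuppL1_nonneg f
  -- choose a finite set S with small tail
  have hpos : (0:ℝ) < (2 * (L + 1))⁻¹ := by positivity
  obtain ⟨S, hS⟩ : ∃ S : Finset Γ, (∑' s : {x : Γ // x ∉ S}, |w ↑s|) < (2 * (L + 1))⁻¹ := by
    have htail := tendsto_tsum_compl_atTop_zero (fun x : Γ => |w x|)
    exact (htail.eventually (gt_mem_nhds hpos)).exists
  set K : Set Γ := {x : Γ | x ∉ S} with hKdef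
  set wS : Γ → ℝ := fun x => if x ∈ S then w x else 0 with hwSdef
  set u : Γ → ℝ := fun x => ∑ s ∈ S, fR f (x * s⁻¹) * wS s with hudef
  set T : Finset Γ := ((f.support ×ˢ S).image fun p => p.1 * p.2) ∪ {1} with hTdef
  set r : Γ → ℝ := fun x => u x - deltaOne x with hrdef
  -- support of u and r
  have hu0 : ∀ x ∉ T, u x = 0 := by
    intro x hx
    by_contra h
    obtain ⟨s, hs, hne⟩ := Finset.exists_ne_zero_of_sum_ne_zero h
    have hfsupp : x * s⁻¹ ∈ f.support := by
      by_contra hf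
      have : fR f (x * s⁻¹) = 0 := by
        simp [fR, Finsupp.notMem_support_iff.1 hf]
      simp [this] at hne
    refine hx (Finset.mem_union_left _ (Finset.mem_image.2 ⟨(x * s⁻¹, s),
      Finset.mem_product.2 ⟨hfsupp, hs⟩, ?_⟩))
    simp
  have h1T : (1:Γ) ∈ T := Finset.mem_union_right _ (Finset.mem_singleton_self 1)
  have hr0 : ∀ x ∉ T, r x = 0 := by
    intro x hx
    have hx1 : x ≠ 1 := fun h => hx (h ▸ h1T)
    simp [hrdef, hu0 x hx, deltaOne, hx1]
  -- summability facts
  have s_f : ∀ x : Γ, Summable fun a => w a * fR f (a⁻¹ * x) := by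
    intro x
    apply summable_of_ne_finset_zero (s := f.support.image fun b => x * b⁻¹)
    intro a ha
    have : fR f (a⁻¹ * x) = 0 := by
      rw [fR]
      norm_cast
      rw [← Finsupp.notMem_support_iff]
      intro hmem
      exact ha (Finset.mem_image.2 ⟨a⁻¹ * x, hmem, by group⟩)
    simp [this]
  have s_u : ∀ γ : Γ, Summable fun a => w a * u (a⁻¹ * γ) := by
    intro γ
    apply summable_of_ne_finset_zero (s := T.image fun t => γ * t⁻¹)
    intro a ha
    have : u (a⁻¹ * γ) = 0 := by
      apply hu0
      intro hT
      exact ha (Finset.mem_image.2 ⟨a⁻¹ * γ, hT, by group⟩)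
    simp [this]
  have s_δ : ∀ γ : Γ, Summable fun a => w a * deltaOne (a⁻¹ * γ) := by
    intro γ
    apply summable_of_ne_finset_zero (s := {γ})
    intro a ha
    have hne : a⁻¹ * γ ≠ 1 := by
      intro h
      rw [inv_mul_eq_one] at h
      exact ha (by simp [h])
    simp [deltaOne, hne]
  -- conv w (fR f) = deltaOne pointwise
  have hwf' : ∀ x : Γ, (∑' a, w a * fR f (a⁻¹ * x)) = deltaOne x := fun x => congrFun hwf x
  -- key computation 1 : ∑' a, w a * u (a⁻¹ γ) = wS γ
  have h1 : ∀ γ : Γ, (∑' a, w a * u (a⁻¹ * γ)) = wS γ := by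
    intro γ
    have step1 : ∀ a : Γ, w a * u (a⁻¹ * γ)
        = ∑ s ∈ S, (w a * fR f (a⁻¹ * (γ * s⁻¹))) * wS s := by
      intro a
      rw [hudef]
      simp only []
      rw [Finset.mul_sum]
      refine Finset.sum_congr rfl fun s _ => ?_
      rw [mul_assoc a⁻¹ γ s⁻¹, mul_assoc]
    rw [tsum_congr step1, Summable.tsum_finsetSum (fun s _ => (s_f (γ * s⁻¹)).mul_right (wS s))]
    have step2 : ∀ s ∈ S, (∑' a, (w a * fR f (a⁻¹ * (γ * s⁻¹))) * wS s)
        = deltaOne (γ * s⁻¹) * wS s := by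
      intro s _
      rw [tsum_mul_right, hwf' (γ * s⁻¹)]
    rw [Finset.sum_congr rfl step2]
    have step3 : ∀ s ∈ S, deltaOne (γ * s⁻¹) * wS s = if s = γ then wS s else 0 := by
      intro s _
      by_cases h : s = γ
      · subst h; simp [deltaOne]
      · have hne : γ * s⁻¹ ≠ 1 := by
          intro hh
          rw [mul_inv_eq_one] at hh
          exact h hh.symm
        simp [deltaOne, hne, h]
    rw [Finset.sum_congr rfl step3, Finset.sum_ite_eq' S γ wS]
    by_cases hγ : γ ∈ S <;> simp [hwSdef, hγ]
  -- key computation 2 : ∑' a, w a * deltaOne (a⁻¹ γ) = w γ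
  have h2 : ∀ γ : Γ, (∑' a, w a * deltaOne (a⁻¹ * γ)) = w γ := by
    intro γ
    rw [tsum_eq_single γ ?_]
    · simp [deltaOne]
    · intro a ha
      have hne : a⁻¹ * γ ≠ 1 := by
        intro h
        rw [inv_mul_eq_one] at h
        exact ha h
      simp [deltaOne, hne]
  -- the key identity
  have hkey : ∀ γ : Γ, w γ = wS γ - ∑' a, w a * r (a⁻¹ * γ) := by
    intro γ
    have hsub : (∑' a, w a * r (a⁻¹ * γ))
        = (∑' a, w a * u (a⁻¹ * γ)) - ∑' a, w a * deltaOne (a⁻¹ * γ) := by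
      rw [← Summable.tsum_sub (s_u γ) (s_δ γ)]
      exact tsum_congr fun a => by simp [hrdef, mul_sub]
    rw [hsub, h1 γ, h2 γ]
    ring
  -- ℓ¹ bound on r
  have hgt : ∀ t : Γ, Summable fun s => fR f (t * s⁻¹) * w s := by
    intro t
    refine Summable.of_norm_bounded (hwa.mul_left L) fun s => ?_
    rw [Real.norm_eq_abs, abs_mul]
    exact mul_le_mul_of_nonneg_right (abs_fR_le f _) (abs_nonneg _)
  have hdelta : ∀ t : Γ, deltaOne t = ∑' s, fR f (t * s⁻¹) * w s := by
    intro t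
    have hc := congrFun hfw t
    have he := Equiv.tsum_eq ((Equiv.inv Γ).trans (Equiv.mulLeft t))
      (fun b => fR f b * w (b⁻¹ * t))
    simp only [Equiv.trans_apply, Equiv.inv_apply, Equiv.coe_mulLeft] at he
    rw [← hc]
    show (∑' (b : Γ), fR f b * w (b⁻¹ * t)) = ∑' s : Γ, fR f (t * s⁻¹) * w s
    rw [← he]
    exact (tsum_congr fun s => by rw [show (t * s⁻¹)⁻¹ * t = s by group]).symm
  have hu_eq : ∀ t : Γ, u t = ∑ s ∈ S, fR f (t * s⁻¹) * w s := by
    intro t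
    exact Finset.sum_congr rfl fun s hs => by simp [hwSdef, hs]
  have hr_eq : ∀ t : Γ, r t = -∑' s : ↥K, fR f (t * (↑s)⁻¹) * w ↑s := by
    intro t
    have hc := Summable.sum_add_tsum_compl (s := S) (hgt t)
    have hKc : (∑' s : ↑((S : Set Γ))ᶜ, fR f (t * (↑s)⁻¹) * w ↑s)
        = ∑' s : ↥K, fR f (t * (↑s)⁻¹) * w ↑s := rfl
    have : r t = (∑ s ∈ S, fR f (t * s⁻¹) * w s) - ∑' s, fR f (t * s⁻¹) * w s := by
      rw [hrdef]
      simp only []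
      rw [hu_eq t, hdelta t]
    rw [this, ← hc, hKc]
    ring
  -- bound eps
  set eps : ℝ := ∑ t ∈ T, |r t| with hepsdef
  have heps0 : 0 ≤ eps := Finset.sum_nonneg fun _ _ => abs_nonneg _
  have hwaK : Summable fun s : ↥K => |w ↑s| := hwa.subtype K
  have hsummK : ∀ t : Γ, Summable fun s : ↥K => |fR f (t * (↑s)⁻¹)| * |w ↑s| := by
    intro t
    refine Summable.of_nonneg_of_le (fun s => by positivity)
      (fun s => mul_le_mul_of_nonneg_right (abs_fR_le f _) (abs_nonneg _))
      (hwaK.mul_left L)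
  have hrow : ∀ s : Γ, ∑ t ∈ T, |fR f (t * s⁻¹)| ≤ L := by
    intro s
    have himg : ∑ t ∈ T, |fR f (t * s⁻¹)| = ∑ x ∈ T.image (fun t => t * s⁻¹), |fR f x| := by
      rw [Finset.sum_image]
      intro a _ b _ h
      exact mul_right_cancel h
    rw [himg]
    exact sum_abs_fR_le f _
  have habs_t : ∀ t : Γ, |r t| ≤ ∑' s : ↥K, |fR f (t * (↑s)⁻¹)| * |w ↑s| := by
    intro t
    rw [hr_eq t, abs_neg]
    have hn := norm_tsum_le_tsum_norm (f := fun s : ↥K => fR f (t * (↑s)⁻¹) * w ↑s) ?_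
    · rw [Real.norm_eq_abs] at hn
      refine hn.trans_eq (tsum_congr fun s => ?_)
      rw [Real.norm_eq_abs, abs_mul]
    · refine Summable.of_nonneg_of_le (fun s => norm_nonneg _) (fun s => ?_) (hwaK.mul_left L)
      rw [Real.norm_eq_abs, abs_mul]
      exact mul_le_mul_of_nonneg_right (abs_fR_le f _) (abs_nonneg _)
  have heps2 : eps ≤ 1/2 := by
    have hsum1 : Summable fun s : ↥K => ∑ t ∈ T, |fR f (t * (↑s)⁻¹)| * |w ↑s| := by
      refine Summable.of_nonneg_of_le
        (fun s => Finset.sum_nonneg fun _ _ => by positivity)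
        (fun s => ?_) (hwaK.mul_left L)
      rw [← Finset.sum_mul]
      exact mul_le_mul_of_nonneg_right (hrow ↑s) (abs_nonneg _)
    have hcalc : eps ≤ L * ∑' s : ↥K, |w ↑s| := by
      calc eps ≤ ∑ t ∈ T, ∑' s : ↥K, |fR f (t * (↑s)⁻¹)| * |w ↑s| :=
            Finset.sum_le_sum fun t _ => habs_t t
        _ = ∑' s : ↥K, ∑ t ∈ T, |fR f (t * (↑s)⁻¹)| * |w ↑s| :=
            (Summable.tsum_finsetSum fun t _ => hsummK t).symm
        _ ≤ ∑' s : ↥K, L * |w ↑s| := by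
            refine Summable.tsum_le_tsum (fun s => ?_) hsum1 (hwaK.mul_left L)
            rw [← Finset.sum_mul]
            exact mul_le_mul_of_nonneg_right (hrow ↑s) (abs_nonneg _)
        _ = L * ∑' s : ↥K, |w ↑s| := tsum_mul_left
    have htl : (∑' s : ↥K, |w ↑s|) < (2 * (L + 1))⁻¹ := hS
    have h2L : (0:ℝ) < 2 * (L + 1) := by linarith
    have : L * (∑' s : ↥K, |w ↑s|) ≤ L * (2 * (L + 1))⁻¹ :=
      mul_le_mul_of_nonneg_left htl.le hL0
    have h12 : L * (2 * (L + 1))⁻¹ ≤ 1/2 := by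
      rw [inv_eq_one_div, mul_one_div, div_le_div_iff₀ h2L (by norm_num : (0:ℝ) < 2)]
      linarith
    linarith
  -- choose radii N and M
  have hNall : ∀ A : Finset Γ, ∃ n : ℕ, ∀ x ∈ A, x ∈ BallF F n := by
    intro A
    choose g hg using hgen
    exact ⟨A.sup g, fun x hx => ballF_mono' F (Finset.le_sup hx) (hg x)⟩
  obtain ⟨N, hN⟩ := hNall S
  obtain ⟨M₀, hM₀⟩ := hNall T
  set M : ℕ := M₀ + 1 with hMdef
  have hM1 : 1 ≤ M := Nat.le_add_left 1 M₀
  have hTM : ∀ t ∈ T, t ∈ BallF F M := fun t ht =>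
    ballF_mono' F (Nat.le_succ M₀) (hM₀ t ht)
  -- uniform bound on w
  set W : ℝ := ∑' x, |w x| with hWdef
  have hWx : ∀ x : Γ, |w x| ≤ W := fun x => Summable.le_tsum hwa x fun j _ => abs_nonneg _
  have hW0 : 0 ≤ W := tsum_nonneg fun _ => abs_nonneg _
  -- main induction
  have hind : ∀ k : ℕ, ∀ γ : Γ, γ ∉ BallF F (k * M + N) → |w γ| ≤ W * (1/2) ^ k := by
    intro k
    induction k with
    | zero => intro γ _; simpa using hWx γ
    | succ k ih =>
      intro γ hγ
      have hγS : γ ∉ S := fun h => hγ (ballF_mono' F (Nat.le_add_left N _) (hN γ h))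
      have hwS0 : wS γ = 0 := if_neg hγS
      have hwγ : w γ = -∑' a, w a * r (a⁻¹ * γ) := by rw [hkey γ, hwS0, zero_sub]
      have hexp : (∑' a, w a * r (a⁻¹ * γ)) = ∑ t ∈ T, w (γ * t⁻¹) * r t := by
        rw [tsum_eq_sum (s := T.image fun t => γ * t⁻¹) ?_]
        · rw [Finset.sum_image ?_]
          · refine Finset.sum_congr rfl fun t _ => ?_
            congr 1
            group
          · intro a _ b _ h
            exact inv_injective (mul_left_cancel h)
        · intro a ha
          have : r (a⁻¹ * γ) = 0 :=
            hr0 _ fun hT => ha (Finset.mem_image.2 ⟨a⁻¹ * γ, hT, by group⟩)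
          simp [this]
      have hIH : ∀ t ∈ T, |w (γ * t⁻¹)| ≤ W * (1/2) ^ k := by
        intro t ht
        refine ih _ fun hmem => hγ ?_
        have hmul := ballF_mul' F hmem (hTM t ht)
        have heqγ : γ * t⁻¹ * t = γ := by group
        rw [heqγ] at hmul
        refine ballF_mono' F (le_of_eq ?_) hmul
        ring
      calc |w γ| = |∑ t ∈ T, w (γ * t⁻¹) * r t| := by rw [hwγ, hexp, abs_neg]
        _ ≤ ∑ t ∈ T, |w (γ * t⁻¹) * r t| := Finset.abs_sum_le_sum_abs _ _
        _ ≤ ∑ t ∈ T, (W * (1/2) ^ k) * |r t| := by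
            refine Finset.sum_le_sum fun t ht => ?_
            rw [abs_mul]
            exact mul_le_mul_of_nonneg_right (hIH t ht) (abs_nonneg _)
        _ = (W * (1/2) ^ k) * eps := by rw [← Finset.mul_sum]
        _ ≤ (W * (1/2) ^ k) * (1/2) :=
            mul_le_mul_of_nonneg_left heps2
              (mul_nonneg hW0 (pow_nonneg (by norm_num) k))
        _ = W * (1/2) ^ (k + 1) := by ring
  -- assemble the exponential bound
  have hM0 : (0:ℝ) < (M:ℝ) := by exact_mod_cast hM1
  set θ : ℝ := (1/2 : ℝ) ^ ((M:ℝ)⁻¹) with hθdef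
  have hθ0 : 0 < θ := Real.rpow_pos_of_pos (by norm_num) _
  have hθ1 : θ < 1 := Real.rpow_lt_one (by norm_num) (by norm_num) (by positivity)
  have hθM : θ ^ M = (1/2 : ℝ) := by
    have hr : θ ^ ((M:ℕ) : ℝ) = (1/2 : ℝ) := by
      rw [hθdef, ← Real.rpow_mul (by norm_num : (0:ℝ) ≤ 1/2),
        inv_mul_cancel₀ (ne_of_gt hM0), Real.rpow_one]
    rw [← Real.rpow_natCast θ M, hr]
  have hP0 : (0:ℝ) < θ ^ (N + M) := pow_pos hθ0 _
  refine ⟨(W + 1) / θ ^ (N + M), div_pos (by linarith) hP0, θ, ⟨hθ0, hθ1⟩, ?_⟩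
  intro n γ hγ
  have hkey2 : ∀ k : ℕ, k * M + N ≤ n → n ≤ k * M + N + M →
      |w γ| ≤ (W + 1) / θ ^ (N + M) * θ ^ n := by
    intro k hk1 hk2
    have hb1 : |w γ| ≤ W * (1/2) ^ k := hind k γ fun hmem => hγ (ballF_mono' F hk1 hmem)
    have hb2 : (1/2:ℝ) ^ k * θ ^ (N + M) ≤ θ ^ n := by
      have hmon : θ ^ (k * M + (N + M)) ≤ θ ^ n :=
        pow_le_pow_of_le_one hθ0.le hθ1.le (by omega)
      calc (1/2:ℝ) ^ k * θ ^ (N + M) = (θ ^ M) ^ k * θ ^ (N + M) := by rw [hθM]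
        _ = θ ^ (k * M + (N + M)) := by rw [← pow_mul', ← pow_add]
        _ ≤ θ ^ n := hmon
    have hhalf : (0:ℝ) ≤ (1/2:ℝ) ^ k := pow_nonneg (by norm_num) k
    calc |w γ| ≤ W * (1/2) ^ k := hb1
      _ ≤ (W + 1) * (1/2) ^ k := by nlinarith
      _ = (W + 1) / θ ^ (N + M) * ((1/2) ^ k * θ ^ (N + M)) := by
          field_simp
      _ ≤ (W + 1) / θ ^ (N + M) * θ ^ n := by
          refine mul_le_mul_of_nonneg_left hb2 ?_
          exact le_of_lt (div_pos (by linarith) hP0)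
  by_cases hn : N ≤ n
  · set k : ℕ := (n - N) / M with hkdef
    have hMpos : 0 < M := hM1
    have e1 := Nat.div_add_mod (n - N) M
    have e2 := Nat.mod_lt (n - N) hMpos
    rw [Nat.mul_comm] at e1
    rw [← hkdef] at e1
    set q : ℕ := k * M with hq
    set m' : ℕ := (n - N) % M with hm'
    refine hkey2 k (by omega) (by omega)
  · have hb2 : θ ^ (N + M) ≤ θ ^ n :=
      pow_le_pow_of_le_one hθ0.le hθ1.le (by omega)
    calc |w γ| ≤ W := hWx γ
      _ ≤ (W + 1) / θ ^ (N + M) * θ ^ (N + M) := by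
          rw [div_mul_cancel₀ _ (ne_of_gt hP0)]
          linarith
      _ ≤ (W + 1) / θ ^ (N + M) * θ ^ n := by
          refine mul_le_mul_of_nonneg_left hb2 ?_
          exact le_of_lt (div_pos (by linarith) hP0)


end
end

section
/- Let Γ be a countable residually finite discrete group, f ∈ ℤΓ invertible in ℓ¹(Γ), and Γ' ≤ Γ a subgroup of finite index. Then ρ_f restricts to an endomorphism of the finite-dimensional real vector space ℓ∞(Γ)^{Γ'} of left Γ'-invariant functions (which is isomorphic to ℝ^{Γ'\Γ}), Fix_{Γ'}(X_f) is finite, and its cardinality equals the absolute value of the determinant of this restriction: |Fix_{Γ'}(X_f)| = |det(ρ_f |_{ℓ∞(Γ)^{Γ'}})|. -/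
open scoped BigOperators symmDiff Pointwise

noncomputable section

section Hilbert

variable {Γ : Type*} [Group Γ]

instance instCFCRealH2 : ContinuousFunctionalCalculus ℝ (H2 Γ →L[ℂ] H2 Γ) IsSelfAdjoint :=
  IsSelfAdjoint.instContinuousFunctionalCalculus

end Hilbert


lemma lshR_add' {Γ : Type*} [Group Γ] (γ : Γ) (a b : Γ → ℝ) :
    lshR γ (a + b) = lshR γ a + lshR γ b := rfl

lemma lshR_smul' {Γ : Type*} [Group Γ] (γ : Γ) (c : ℝ) (a : Γ → ℝ) :
    lshR γ (c • a) = c • lshR γ a := rfl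

/-- The space `ℓ∞(Γ)^{Γ'}` of left `Γ'`-invariant real functions on `Γ`, as a submodule
of `Γ → ℝ` (for finite-index `Γ'` these are automatically bounded). -/
def invSubmodule {Γ : Type*} [Group Γ] (Γ' : Subgroup Γ) : Submodule ℝ (Γ → ℝ) where
  carrier := {w | ∀ γ ∈ Γ', lshR γ w = w}
  add_mem' := by
    intro a b ha hb γ hγ
    rw [lshR_add', ha γ hγ, hb γ hγ]
  zero_mem' := by
    intro γ hγ
    rfl
  smul_mem' := by
    intro c a ha γ hγ
    rw [lshR_smul', ha γ hγ]

/-- `ρ_f`, for `f ∈ ℤΓ`, as a linear endomorphism of the space of all real functions. -/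
def rhoInfLin {Γ : Type*} [Group Γ] (f : Γ →₀ ℤ) : (Γ → ℝ) →ₗ[ℝ] (Γ → ℝ) where
  toFun := rhoInf f
  map_add' a b := by
    funext γ
    simp only [rhoInf, Finsupp.sum, Pi.add_apply, mul_add, Finset.sum_add_distrib]
  map_smul' c a := by
    funext γ
    simp only [rhoInf, Finsupp.sum, Pi.smul_apply, smul_eq_mul, RingHom.id_apply,
      Finset.mul_sum]
    exact Finset.sum_congr rfl fun x _ => by ring


/-! ### Auxiliary development for Statement 10 -/

section Aux10

variable {Γ : Type*} [Group Γ] (Γ' : Subgroup Γ)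

/-- The space of right cosets `Γ'\Γ`. -/
abbrev QR := Quotient (QuotientGroup.rightRel Γ')

/-- Projection to right cosets. -/
def mkR : Γ → QR Γ' := Quotient.mk''

lemma mkR_eq {a b : Γ} : mkR Γ' a = mkR Γ' b ↔ b * a⁻¹ ∈ Γ' := by
  unfold mkR
  rw [Quotient.eq'']
  exact QuotientGroup.rightRel_apply

/-- The right multiplication action of `Γ` on `Γ'\Γ`. -/
def qmul (q : QR Γ') (γ : Γ) : QR Γ' :=
  Quotient.map' (· * γ) (by
    intro a b h
    rw [QuotientGroup.rightRel_apply] at h ⊢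
    simpa [mul_assoc, mul_inv_rev] using h) q

lemma mkR_mul (γ' γ : Γ) : mkR Γ' (γ' * γ) = qmul Γ' (mkR Γ' γ') γ := rfl

variable {Γ'}

lemma eq_of_mkR {A : Type*} {w : Γ → A} (hw : ∀ γ ∈ Γ', ∀ γ', w (γ⁻¹ * γ') = w γ')
    {a b : Γ} (h : mkR Γ' a = mkR Γ' b) : w a = w b := by
  rw [mkR_eq] at h
  have := hw _ h b
  simpa [mul_assoc] using this

lemma factors_eq {A : Type*} {w : Γ → A} (hw : ∀ γ ∈ Γ', ∀ γ', w (γ⁻¹ * γ') = w γ')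
    (γ : Γ) : w γ = w (Quotient.out (mkR Γ' γ)) :=
  eq_of_mkR hw (Quotient.out_eq' (mkR Γ' γ)).symm

lemma comp_invariant {A : Type*} (u : QR Γ' → A) (γ : Γ) (hγ : γ ∈ Γ') (γ' : Γ) :
    u (mkR Γ' (γ⁻¹ * γ')) = u (mkR Γ' γ') := by
  congr 1
  rw [mkR_eq]
  simpa using hγ

lemma finiteQR [Γ'.FiniteIndex] : Finite (QR Γ') :=
  Finite.of_equiv _ (QuotientGroup.quotientRightRelEquivQuotientLeftRel Γ').symm

variable (Γ') [Fintype (QR Γ')] [DecidableEq (QR Γ')]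

/-- The integer matrix of `ρ_f` on the coset space. -/
def matQ (f : Γ →₀ ℤ) : Matrix (QR Γ') (QR Γ') ℤ :=
  fun q q' => ∑ γ ∈ f.support.filter (fun γ => qmul Γ' q γ = q'), f γ

lemma key_sum (f : Γ →₀ ℤ) {A : Type*} [AddCommGroup A] (u : QR Γ' → A) (q : QR Γ') :
    (f.sum fun γ c => c • u (qmul Γ' q γ)) = ∑ q', matQ Γ' f q q' • u q' := by
  rw [Finsupp.sum]
  rw [← Finset.sum_fiberwise_of_maps_to (g := fun γ => qmul Γ' q γ) (t := Finset.univ)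
    (fun γ _ => Finset.mem_univ _)]
  refine Finset.sum_congr rfl fun q' _ => ?_
  rw [matQ, Finset.sum_smul]
  refine Finset.sum_congr rfl fun γ hγ => ?_
  rw [(Finset.mem_filter.mp hγ).2]

end Aux10

section LatticeCount

lemma card_quot_eq_natAbs_det {ι : Type*} [Fintype ι] [DecidableEq ι]
    (N : Submodule ℤ (ι → ℤ)) (e : (ι → ℤ) ≃ₗ[ℤ] N) :
    Nat.card ((ι → ℤ) ⧸ N) = (LinearMap.det (N.subtype ∘ₗ e.toLinearMap)).natAbs := by
  obtain ⟨n, snf⟩ := N.smithNormalForm (Pi.basisFun ℤ ι)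
  have hidx : N.toAddSubgroup.index = Nat.card ((ι → ℤ) ⧸ N) := rfl
  have hne : N.toAddSubgroup.index ≠ 0 :=
    Int.submodule_toAddSubgroup_index_ne_zero_iff.mpr ⟨e.symm⟩
  have hn : n = Fintype.card ι := snf.toAddSubgroup_index_ne_zero_iff.mp hne
  have hprod : N.toAddSubgroup.index = ∏ i : Fin n, (snf.a i).natAbs := by
    rw [snf.toAddSubgroup_index_eq_pow_mul_prod]
    have h0 : Fintype.card ι - n = 0 := by omega
    rw [h0]
    simp [Ideal.span_singleton_toAddSubgroup_eq_zmultiples, Int.index_zmultiples]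
  have hσb : Function.Bijective snf.f :=
    (Fintype.bijective_iff_injective_and_card snf.f).mpr ⟨snf.f.injective, by simp [hn]⟩
  let σ : Fin n ≃ ι := Equiv.ofBijective snf.f hσb
  let bN' : Module.Basis ι ℤ N := snf.bN.reindex σ
  let e' : (ι → ℤ) ≃ₗ[ℤ] N := snf.bM.equiv bN' (Equiv.refl ι)
  have hdet' : LinearMap.det (N.subtype ∘ₗ e'.toLinearMap) = ∏ i : ι, snf.a (σ.symm i) := by
    rw [← LinearMap.det_toMatrix snf.bM, ← Matrix.det_diagonal]
    congr 1
    ext i j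
    have he' : e' (snf.bM j) = bN' j := snf.bM.equiv_apply j bN' (Equiv.refl ι)
    have hb : ((bN' j : (ι → ℤ))) = snf.a (σ.symm j) • snf.bM j := by
      show ((snf.bN.reindex σ) j : (ι → ℤ)) = _
      rw [Module.Basis.reindex_apply, snf.snf (σ.symm j)]
      congr 2
      exact σ.apply_symm_apply j
    rw [LinearMap.toMatrix_apply]
    simp only [LinearMap.comp_apply, LinearEquiv.coe_coe, he', Submodule.coe_subtype, hb]
    rw [map_smul, Module.Basis.repr_self]
    simp only [Finsupp.smul_single, smul_eq_mul, mul_one, Finsupp.single_apply,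
      Matrix.diagonal_apply]
    by_cases h : i = j <;> simp [h, eq_comm]
  have hcomp : (N.subtype ∘ₗ e.toLinearMap) ∘ₗ (e'.trans e.symm).toLinearMap
      = N.subtype ∘ₗ e'.toLinearMap := by
    ext v i
    simp
  have hu : IsUnit (LinearMap.det (e'.trans e.symm).toLinearMap) :=
    LinearEquiv.isUnit_det' _
  have hdetnat : (LinearMap.det (N.subtype ∘ₗ e.toLinearMap)).natAbs
      = (LinearMap.det (N.subtype ∘ₗ e'.toLinearMap)).natAbs := by
    rw [← hcomp, LinearMap.det_comp, Int.natAbs_mul]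
    rcases Int.isUnit_iff.mp hu with h | h <;> simp [h]
  rw [← hidx, hprod, hdetnat, hdet']
  rw [← Equiv.prod_comp σ.symm (fun j => (snf.a j).natAbs)]
  exact (map_prod Int.natAbsHom _ _).symm

lemma coeT_eq_zero {r : ℝ} : ((r : ℝ) : Torus) = 0 ↔ ∃ n : ℤ, (n : ℝ) = r := by
  rw [AddCircle.coe_eq_zero_iff]
  simp [zsmul_eq_mul]

lemma coeT_sub (r s : ℝ) : ((r - s : ℝ) : Torus) = (r : Torus) - (s : Torus) :=
  map_sub (QuotientAddGroup.mk' _) r s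

lemma coeT_sum {ι : Type*} [Fintype ι] (c : ι → ℤ) (v : ι → ℝ) :
    ∑ i, c i • ((v i : ℝ) : Torus) = ((∑ i, (c i : ℝ) * v i : ℝ) : Torus) := by
  rw [show ((∑ i, (c i : ℝ) * v i : ℝ) : Torus)
      = QuotientAddGroup.mk' _ (∑ i, (c i : ℝ) * v i) from rfl, map_sum]
  refine Finset.sum_congr rfl fun i _ => ?_
  rw [show (c i : ℝ) * v i = c i • v i from (zsmul_eq_mul _ _).symm, map_zsmul]
  rfl

lemma coeT_sub_eq {r s : ℝ} : ((r : ℝ) : Torus) = s ↔ ∃ n : ℤ, (n : ℝ) = r - s := by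
  rw [← coeT_eq_zero (r := r - s), coeT_sub, sub_eq_zero]

lemma torus_ker_card {ι : Type*} [Fintype ι] [DecidableEq ι] (M : Matrix ι ι ℤ)
    (hd : M.det ≠ 0) :
    Nat.card {u : ι → Torus | ∀ q, ∑ q', M q q' • u q' = 0} = M.det.natAbs := by
  classical
  set S := {u : ι → Torus | ∀ q, ∑ q', M q q' • u q' = 0} with hS
  set A : Matrix ι ι ℝ := M.map (Int.cast : ℤ → ℝ) with hA
  have hAdet : A.det = (M.det : ℝ) := (RingHom.map_det (Int.castRingHom ℝ) M).symm
  have hAunit : IsUnit A.det := by rw [hAdet]; exact isUnit_iff_ne_zero.mpr (by exact_mod_cast hd)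
  set B : Matrix ι ι ℝ := A⁻¹ with hB
  have hAB : ∀ v : ι → ℝ, A.mulVec (B.mulVec v) = v := by
    intro v
    rw [Matrix.mulVec_mulVec, Matrix.mul_nonsing_inv A hAunit, Matrix.one_mulVec]
  have hBA : ∀ v : ι → ℝ, B.mulVec (A.mulVec v) = v := by
    intro v
    rw [Matrix.mulVec_mulVec, Matrix.nonsing_inv_mul A hAunit, Matrix.one_mulVec]
  have hcast : ∀ m : ι → ℤ, A.mulVec (fun i => (m i : ℝ)) = fun i => ((M.mulVec m i : ℤ) : ℝ) := by
    intro m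
    funext i
    simp only [Matrix.mulVec, dotProduct, hA, Matrix.map_apply]
    push_cast
    rfl
  set π : (ι → ℝ) → (ι → Torus) := fun v i => ((v i : ℝ) : Torus) with hπ
  have hcond : ∀ v : ι → ℝ, π v ∈ S ↔ ∀ q, ∃ n : ℤ, (n : ℝ) = A.mulVec v q := by
    intro v
    unfold S π
    simp only [Set.mem_setOf_eq]
    refine forall_congr' fun q => ?_
    rw [coeT_sum, show ∑ q', ((M q q' : ℝ)) * v q' = A.mulVec v q from rfl, coeT_eq_zero]
  set φ : (ι → ℤ) → (ι → Torus) := fun k => π (B.mulVec (fun i => (k i : ℝ))) with hφ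
  have hφS : ∀ k, φ k ∈ S := by
    intro k
    rw [hφ, hcond]
    intro q
    exact ⟨k q, by rw [hAB]⟩
  set N' : Submodule ℤ (ι → ℤ) := LinearMap.range (Matrix.toLin' M) with hN'
  have hker : ∀ k k' : ι → ℤ, φ k = φ k' ↔ k - k' ∈ N' := by
    intro k k'
    constructor
    · intro h
      have h2 : ∀ i, ∃ n : ℤ, (n : ℝ) =
          B.mulVec (fun i => (k i : ℝ)) i - B.mulVec (fun i => (k' i : ℝ)) i := by
        intro i
        have := congrFun h i
        exact coeT_sub_eq.mp this
      choose m hm using h2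
      have hmv : B.mulVec (fun i => ((k i : ℝ)) - ((k' i : ℝ))) = fun i => (m i : ℝ) := by
        funext i
        rw [show (fun i => ((k i : ℝ)) - ((k' i : ℝ))) =
          (fun i => (k i : ℝ)) - (fun i => (k' i : ℝ)) from rfl, Matrix.mulVec_sub]
        exact (hm i).symm
      have : (fun i => ((k i : ℝ)) - ((k' i : ℝ))) = A.mulVec (fun i => (m i : ℝ)) := by
        rw [← hmv, hAB]
      rw [hcast] at this
      refine ⟨m, ?_⟩
      rw [Matrix.toLin'_apply]
      funext i
      have := congrFun this i
      have : ((k i - k' i : ℤ) : ℝ) = ((M.mulVec m i : ℤ) : ℝ) := by push_cast at this ⊢; linarith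
      exact_mod_cast this.symm
    · rintro ⟨m, hm⟩
      rw [Matrix.toLin'_apply] at hm
      funext i
      rw [hφ]
      apply coeT_sub_eq.mpr
      refine ⟨m i, ?_⟩
      have : B.mulVec (fun j => (k j : ℝ)) - B.mulVec (fun j => (k' j : ℝ))
          = B.mulVec (fun j => ((k j : ℝ) - (k' j : ℝ))) := by
        rw [show (fun j => ((k j : ℝ)) - ((k' j : ℝ))) =
          (fun j => (k j : ℝ)) - (fun j => (k' j : ℝ)) from rfl, Matrix.mulVec_sub]
      have h3 : (fun j => ((k j : ℝ) - (k' j : ℝ))) = A.mulVec (fun j => (m j : ℝ)) := by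
        rw [hcast]
        funext j
        have h4 : M.mulVec m j = k j - k' j := by rw [congrFun hm j]; rfl
        rw [h4]
        push_cast
        ring
      calc (m i : ℝ) = B.mulVec (A.mulVec (fun j => (m j : ℝ))) i := by rw [hBA]
    _ = (B.mulVec (fun j => (k j : ℝ)) - B.mulVec (fun j => (k' j : ℝ))) i := by
          rw [this, h3]
    _ = _ := by simp [Pi.sub_apply]
  have hsurj : ∀ x ∈ S, ∃ k : ι → ℤ, φ k = x := by
    intro x hx
    have : ∀ i, ∃ r : ℝ, ((r : ℝ) : Torus) = x i := fun i => QuotientAddGroup.mk_surjective (x i)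
    choose v hv using this
    have hπv : π v = x := funext hv
    rw [← hπv, hcond] at hx
    choose m hm using hx
    refine ⟨m, ?_⟩
    rw [hφ, ← hπv]
    have hmv : (fun i => ((m i : ℝ))) = A.mulVec v := funext hm
    show π (B.mulVec fun i => ((m i : ℝ))) = π v
    rw [hmv, hBA]
  have hmkout : ∀ z : (ι → ℤ) ⧸ N', Submodule.Quotient.mk z.out = z := fun z => by
    rw [← Submodule.Quotient.mk''_eq_mk, Quotient.out_eq']
  let ψ : ((ι → ℤ) ⧸ N') → S := fun z => ⟨φ z.out, hφS _⟩
  have hψbij : Function.Bijective ψ := by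
    constructor
    · intro z z' h
      have : φ z.out = φ z'.out := congrArg Subtype.val h
      rw [hker] at this
      rw [← hmkout z, ← hmkout z', Submodule.Quotient.eq]
      exact this
    · rintro ⟨x, hx⟩
      obtain ⟨k, hk⟩ := hsurj x hx
      refine ⟨Submodule.Quotient.mk k, ?_⟩
      apply Subtype.ext
      show φ (Submodule.Quotient.mk k).out = x
      rw [← hk]
      rw [hker]
      rw [← Submodule.Quotient.eq, hmkout]
  have hc1 : Nat.card S = Nat.card ((ι → ℤ) ⧸ N') :=
    (Nat.card_congr (Equiv.ofBijective ψ hψbij)).symm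
  have hinj : Function.Injective (Matrix.toLin' M) := by
    intro a b hab
    rw [Matrix.toLin'_apply, Matrix.toLin'_apply] at hab
    funext i
    have : A.mulVec (fun j => (a j : ℝ)) = A.mulVec (fun j => (b j : ℝ)) := by
      rw [hcast, hcast, hab]
    have h2 := congrFun (hBA (fun j => (a j : ℝ))) i
    rw [this, hBA] at h2
    exact_mod_cast h2.symm
  let e : (ι → ℤ) ≃ₗ[ℤ] N' := LinearEquiv.ofInjective (Matrix.toLin' M) hinj
  have hce : N'.subtype ∘ₗ e.toLinearMap = Matrix.toLin' M := by
    ext v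
    rfl
  rw [hc1, card_quot_eq_natAbs_det N' e, hce, LinearMap.det_toLin']

end LatticeCount

section L1Inj

variable {Γ : Type*} [Group Γ]

set_option maxHeartbeats 1000000 in
lemma rho_inj (f : Γ →₀ ℤ) {g : Γ → ℝ} (hg : IsL1Inverse (fR f) g)
    {w : Γ → ℝ} (hw : ∃ C : ℝ, ∀ γ, |w γ| ≤ C) (h0 : rhoInf f w = 0) : w = 0 := by
  classical
  obtain ⟨C, hC⟩ := hw
  have hgsum : Summable g := hg.1
  have habs : Summable (fun γ => |g γ|) := hgsum.abs
  have habs' : ∀ δ0 : Γ, Summable (fun γ' => |g (γ' * δ0)|) :=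
    fun δ0 => (Equiv.mulRight δ0).summable_iff.mpr habs
  have S2 : ∀ (c : ℝ) (F : Γ → Γ) (δ0 : Γ), Summable (fun γ' => c * w (F γ') * g (γ' * δ0)) := by
    intro c F δ0
    apply Summable.of_norm_bounded ((habs' δ0).mul_left (|c| * C))
    intro γ'
    simp only [Real.norm_eq_abs, abs_mul]
    exact mul_le_mul_of_nonneg_right
      (mul_le_mul_of_nonneg_left (hC (F γ')) (abs_nonneg c)) (abs_nonneg _)
  have S1 : ∀ (c : ℝ) (F : Γ → Γ), Summable (fun γ' => c * w (F γ') * g γ') := by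
    intro c F
    have h := S2 c F 1
    simp only [mul_one] at h
    exact h
  have key : ∀ γ, rhoL1 g (rhoInf f w) γ = w γ := by
    intro γ
    have e1 : rhoL1 g (rhoInf f w) γ
        = ∑' γ', ∑ γ'' ∈ f.support, (f γ'' : ℝ) * w (γ * γ' * γ'') * g γ' := by
      rw [rhoL1]
      congr 1
      funext γ'
      rw [rhoInf, Finsupp.sum, Finset.sum_mul]
    have e2 : (∑' γ', ∑ γ'' ∈ f.support, (f γ'' : ℝ) * w (γ * γ' * γ'') * g γ')
        = ∑ γ'' ∈ f.support, ∑' γ', (f γ'' : ℝ) * w (γ * γ' * γ'') * g γ' :=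
      Summable.tsum_finsetSum (fun γ'' _ => S1 _ _)
    have e3 : ∀ γ'' ∈ f.support, (∑' γ', (f γ'' : ℝ) * w (γ * γ' * γ'') * g γ')
        = ∑' δ, (f γ'' : ℝ) * w (γ * δ) * g (δ * γ''⁻¹) := by
      intro γ'' _
      rw [← Equiv.tsum_eq (Equiv.mulRight γ'')
        (fun δ => (f γ'' : ℝ) * w (γ * δ) * g (δ * γ''⁻¹))]
      apply tsum_congr
      intro γ'
      simp [mul_assoc]
    have e4 : (∑ γ'' ∈ f.support, ∑' δ, (f γ'' : ℝ) * w (γ * δ) * g (δ * γ''⁻¹))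
        = ∑' δ, ∑ γ'' ∈ f.support, (f γ'' : ℝ) * w (γ * δ) * g (δ * γ''⁻¹) :=
      (Summable.tsum_finsetSum (fun γ'' _ => S2 _ _ _)).symm
    have e5 : ∀ δ, (∑ γ'' ∈ f.support, (f γ'' : ℝ) * w (γ * δ) * g (δ * γ''⁻¹))
        = w (γ * δ) * conv g (fR f) δ := by
      intro δ
      have hconv : conv g (fR f) δ = ∑ γ'' ∈ f.support, g (δ * γ''⁻¹) * (f γ'' : ℝ) := by
        rw [conv]
        have hzero : ∀ γ' ∉ f.support.image (fun γ'' => δ * γ''⁻¹),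
            g γ' * fR f (γ'⁻¹ * δ) = 0 := by
          intro γ' hγ'
          have hf0 : f (γ'⁻¹ * δ) = 0 := by
            by_contra hfne
            exact hγ' (Finset.mem_image.mpr
              ⟨γ'⁻¹ * δ, Finsupp.mem_support_iff.mpr hfne, by group⟩)
          rw [fR, hf0]
          simp
        rw [tsum_eq_sum hzero, Finset.sum_image (by intro a _ b _ h; simpa using h)]
        refine Finset.sum_congr rfl fun γ'' _ => ?_
        congr 1
        have harg : (δ * γ''⁻¹)⁻¹ * δ = γ'' := by group
        rw [fR, harg]
      rw [hconv, Finset.mul_sum]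
      refine Finset.sum_congr rfl fun γ'' _ => ?_
      ring
    have e6 : (∑' δ, w (γ * δ) * conv g (fR f) δ) = w γ := by
      rw [hg.2.2]
      rw [tsum_eq_single 1 (by
        intro δ hδ
        rw [deltaOne]
        simp [hδ])]
      rw [deltaOne]
      simp
    rw [e1, e2, Finset.sum_congr rfl e3, e4, ← e6]
    exact tsum_congr e5
  funext γ
  have := key γ
  rw [h0] at this
  rw [← this, rhoL1]
  simp

end L1Inj

/-- Let `Γ` be a countable residually finite discrete group, `f ∈ ℤΓ`
invertible in `ℓ¹(Γ)`, and `Γ' ≤ Γ` of finite index. Then `ρ_f` restricts to an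
endomorphism of the finite-dimensional space `ℓ∞(Γ)^{Γ'}` of left `Γ'`-invariant
functions, `Fix_{Γ'}(X_f)` is finite, and
`|Fix_{Γ'}(X_f)| = |det(ρ_f |_{ℓ∞(Γ)^{Γ'}})|`. -/
theorem statement10 {Γ : Type*} [Group Γ] [Countable Γ] (hRF : ResFinite Γ)
    (f : Γ →₀ ℤ) (hf : ∃ g : Γ → ℝ, IsL1Inverse (fR f) g)
    (Γ' : Subgroup Γ) (hΓ' : Γ'.FiniteIndex) :
    ∃ h : ∀ v ∈ invSubmodule Γ', rhoInfLin f v ∈ invSubmodule Γ',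
      FiniteDimensional ℝ (invSubmodule Γ') ∧ (FixSet f Γ').Finite ∧
      (Nat.card (FixSet f Γ') : ℝ) = |LinearMap.det ((rhoInfLin f).restrict h)| := by
  classical
  haveI : Γ'.FiniteIndex := hΓ'
  haveI : Finite (QR Γ') := finiteQR
  haveI : Fintype (QR Γ') := Fintype.ofFinite _
  obtain ⟨g, hg⟩ := hf
  have hres : ∀ v ∈ invSubmodule Γ', rhoInfLin f v ∈ invSubmodule Γ' := by
    intro v hv γ hγ
    funext γ'
    show rhoInf f v (γ⁻¹ * γ') = rhoInf f v γ'
    rw [rhoInf, rhoInf]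
    refine Finsupp.sum_congr fun γ'' _ => ?_
    rw [mul_assoc]
    rw [show v (γ⁻¹ * (γ' * γ'')) = v (γ' * γ'') from congrFun (hv γ hγ) (γ' * γ'')]
  have hwfac : ∀ w : Γ → ℝ, w ∈ invSubmodule Γ' → ∀ γ ∈ Γ', ∀ γ', w (γ⁻¹ * γ') = w γ' :=
    fun w hw γ hγ γ' => congrFun (hw γ hγ) γ'
  let E : invSubmodule Γ' ≃ₗ[ℝ] (QR Γ' → ℝ) :=
    { toFun := fun w => fun q => (w : Γ → ℝ) (Quotient.out q)
      map_add' := fun _ _ => rfl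
      map_smul' := fun _ _ => rfl
      invFun := fun u => ⟨fun γ => u (mkR Γ' γ), by
        intro γ hγ
        funext γ'
        exact comp_invariant u γ hγ γ'⟩
      left_inv := fun w => Subtype.ext (funext fun γ => (factors_eq (hwfac w w.2) γ).symm)
      right_inv := fun u => funext fun q => by
        show u (mkR Γ' (Quotient.out q)) = u q
        congr 1
        exact Quotient.out_eq' q }
  set M : Matrix (QR Γ') (QR Γ') ℤ := matQ Γ' f with hM
  set A : Matrix (QR Γ') (QR Γ') ℝ := M.map (Int.cast : ℤ → ℝ) with hA
  have hcomm : ∀ (u : QR Γ' → ℝ) (γ : Γ),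
      rhoInf f (fun x => u (mkR Γ' x)) γ = ∑ q', (M (mkR Γ' γ) q' : ℝ) * u q' := by
    intro u γ
    have h1 : rhoInf f (fun x => u (mkR Γ' x)) γ
        = f.sum fun γ'' c => c • u (qmul Γ' (mkR Γ' γ) γ'') := by
      rw [rhoInf]
      refine Finsupp.sum_congr fun γ'' _ => ?_
      rw [← mkR_mul, zsmul_eq_mul]
    rw [h1, key_sum]
    exact Finset.sum_congr rfl fun q' _ => (zsmul_eq_mul _ _)
  have hconj : (E : invSubmodule Γ' →ₗ[ℝ] (QR Γ' → ℝ)) ∘ₗ ((rhoInfLin f).restrict hres) ∘ₗ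
      (E.symm : (QR Γ' → ℝ) →ₗ[ℝ] invSubmodule Γ') = Matrix.toLin' A := by
    apply LinearMap.ext
    intro u
    funext q
    show rhoInf f (fun x => u (mkR Γ' x)) (Quotient.out q) = (Matrix.toLin' A) u q
    rw [hcomm, Matrix.toLin'_apply]
    rw [show mkR Γ' (Quotient.out q) = q from Quotient.out_eq' q]
    rfl
  have hdet1 : LinearMap.det ((rhoInfLin f).restrict hres) = (M.det : ℝ) := by
    rw [← LinearMap.det_conj ((rhoInfLin f).restrict hres) E, hconj, LinearMap.det_toLin']
    rw [hA]
    simpa using (RingHom.map_det (Int.castRingHom ℝ) M).symm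
  haveI hFD : FiniteDimensional ℝ (invSubmodule Γ') := LinearEquiv.finiteDimensional E.symm
  have hbdd : ∀ w : Γ → ℝ, w ∈ invSubmodule Γ' → ∃ C : ℝ, ∀ γ, |w γ| ≤ C := by
    intro w hw
    refine ⟨∑ q : QR Γ', |w (Quotient.out q)|, fun γ => ?_⟩
    rw [factors_eq (hwfac w hw) γ]
    exact Finset.single_le_sum (f := fun q => |w (Quotient.out q)|)
      (fun q _ => abs_nonneg _) (Finset.mem_univ _)
  have hinj : Function.Injective ((rhoInfLin f).restrict hres) := by
    intro a b hab
    have h1 : rhoInf f ((a : Γ → ℝ) - (b : Γ → ℝ)) = 0 := by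
      have h2 : rhoInfLin f ((a : Γ → ℝ) - (b : Γ → ℝ)) = 0 := by
        rw [map_sub]
        have h3 : rhoInfLin f (a : Γ → ℝ) = rhoInfLin f (b : Γ → ℝ) := by
          have := congrArg Subtype.val hab
          exact this
        rw [h3, sub_self]
      exact h2
    have hmem : (a : Γ → ℝ) - (b : Γ → ℝ) ∈ invSubmodule Γ' :=
      Submodule.sub_mem _ a.2 b.2
    have h0 : ((a : Γ → ℝ) - (b : Γ → ℝ)) = 0 := rho_inj f hg (hbdd _ hmem) h1
    exact Subtype.ext (sub_eq_zero.mp h0)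
  have hdet0 : (M.det : ℝ) ≠ 0 := by
    rw [← hdet1]
    have hbij : Function.Bijective ((rhoInfLin f).restrict hres) :=
      ⟨hinj, (LinearMap.injective_iff_surjective).mp hinj⟩
    have h5 := LinearEquiv.isUnit_det' (LinearEquiv.ofBijective _ hbij)
    exact h5.ne_zero
  have hMdet : M.det ≠ 0 := fun h => hdet0 (by rw [h]; simp)
  -- the fixed point set
  have hxfac : ∀ x : Γ → Torus, (∀ γ ∈ Γ', lsh γ x = x) → ∀ γ ∈ Γ', ∀ γ', x (γ⁻¹ * γ') = x γ' :=
    fun x hx γ hγ γ' => congrFun (hx γ hγ) γ'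
  have hTcomm : ∀ (u : QR Γ' → Torus) (γ : Γ),
      rhoT f (fun x => u (mkR Γ' x)) γ = ∑ q', M (mkR Γ' γ) q' • u q' := by
    intro u γ
    show (f.sum fun γ0 c => c • u (mkR Γ' (γ * γ0))) = _
    have h1 : (f.sum fun γ0 c => c • u (mkR Γ' (γ * γ0)))
        = f.sum fun γ0 c => c • u (qmul Γ' (mkR Γ' γ) γ0) :=
      Finsupp.sum_congr fun γ0 _ => by rw [mkR_mul]
    rw [h1, key_sum]
  let F : FixSet f Γ' ≃ {u : QR Γ' → Torus | ∀ q, ∑ q', M q q' • u q' = 0} :=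
    { toFun := fun x => ⟨fun q => x.1 (Quotient.out q), by
        intro q
        have hx1 : rhoT f x.1 = 0 := x.2.1
        have hfac : ∀ γ, x.1 γ = x.1 (Quotient.out (mkR Γ' γ)) := factors_eq (hxfac x.1 x.2.2)
        have heq : (fun γ => x.1 (Quotient.out (mkR Γ' γ))) = x.1 :=
          funext fun γ => (hfac γ).symm
        have h2 := hTcomm (fun q => x.1 (Quotient.out q)) (Quotient.out q)
        rw [heq, hx1] at h2
        rw [show mkR Γ' (Quotient.out q) = q from Quotient.out_eq' q] at h2
        simpa using h2.symm⟩
      invFun := fun u => ⟨fun γ => u.1 (mkR Γ' γ), by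
        constructor
        · show rhoT f (fun γ => u.1 (mkR Γ' γ)) = 0
          funext γ
          rw [hTcomm]
          exact u.2 (mkR Γ' γ)
        · intro γ hγ
          funext γ'
          exact comp_invariant u.1 γ hγ γ'⟩
      left_inv := fun x => Subtype.ext (funext fun γ => (factors_eq (hxfac x.1 x.2.2) γ).symm)
      right_inv := fun u => Subtype.ext (funext fun q =>
        congrArg u.1 (Quotient.out_eq' q)) }
  have hcard : Nat.card (FixSet f Γ') = M.det.natAbs := by
    rw [Nat.card_congr F]
    exact torus_ker_card M hMdet
  have hfin : (FixSet f Γ').Finite := by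
    rw [← Set.finite_coe_iff]
    have hnz : Nat.card (FixSet f Γ') ≠ 0 := by
      rw [hcard]
      simpa using hMdet
    exact (Nat.card_ne_zero.mp hnz).2
  refine ⟨hres, hFD, hfin, ?_⟩
  rw [hcard, hdet1, Nat.cast_natAbs, Int.cast_abs]

end
end
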